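/- arXiv:1010.2333 — 2 statements merged into one kernel-verified Lean document; each statement's English description precedes it below -/
import Mathlib

section
/- Let L be a linear subspace of ℝ^d and let 0 < ε ≤ 1/2. If u, v are unit vectors in ℝ^d with ‖u − v‖ ≤ ε³ and ‖u|L‖ ≥ ε, then ‖v|L‖ ≥ ε/2 (in particular v ∉ L^⊥) and ‖pr_L(u) − pr_L(v)‖ ≤ 3ε. -/
open MeasureTheory Metric Matrix
open scoped RealInnerProductSpace Pointwise

noncomputable section

def frobNorm {d : ℕ} (A : Matrix (Fin d) (Fin d) ℝ) : ℝ :=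
  Real.sqrt (∑ i, ∑ j, (A i j) ^ 2)

def rotDist {d : ℕ} (ρ : Matrix (Fin d) (Fin d) ℝ) : ℝ := frobNorm (ρ - 1)

def IsSO {d : ℕ} (ρ : Matrix (Fin d) (Fin d) ℝ) : Prop := ρᵀ * ρ = 1 ∧ ρ.det = 1

def rotApply {d : ℕ} (ρ : Matrix (Fin d) (Fin d) ℝ) :
    EuclideanSpace ℝ (Fin d) → EuclideanSpace ℝ (Fin d) :=
  Matrix.toEuclideanLin ρ

def projL {d : ℕ} (L : Submodule ℝ (EuclideanSpace ℝ (Fin d)))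
    (x : EuclideanSpace ℝ (Fin d)) : EuclideanSpace ℝ (Fin d) :=
  (L.orthogonalProjection x : EuclideanSpace ℝ (Fin d))

def sphProj {d : ℕ} (L : Submodule ℝ (EuclideanSpace ℝ (Fin d)))
    (x : EuclideanSpace ℝ (Fin d)) : EuclideanSpace ℝ (Fin d) :=
  ‖projL L x‖⁻¹ • projL L x

def projMeasure {d : ℕ} (L : Submodule ℝ (EuclideanSpace ℝ (Fin d)))
    (μ : Measure (EuclideanSpace ℝ (Fin d))) : Measure (EuclideanSpace ℝ (Fin d)) :=
  Measure.map (sphProj L) (μ.withDensity fun u => ENNReal.ofReal ‖projL L u‖)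

def mphi {d : ℕ} (φ : Measure (EuclideanSpace ℝ (Fin d))) : ℝ :=
  sInf ((fun u => ∫ v, |⟪u, v⟫| ∂φ) '' (sphere (0 : EuclideanSpace ℝ (Fin d)) 1))

def suppFn {d : ℕ} (B : Set (EuclideanSpace ℝ (Fin d))) (v : EuclideanSpace ℝ (Fin d)) : ℝ :=
  sSup ((fun y => ⟪y, v⟫) '' B)

def devi {d : ℕ} (L : Submodule ℝ (EuclideanSpace ℝ (Fin d)))
    (K M : Set (EuclideanSpace ℝ (Fin d))) : ℝ :=
  Real.log (sInf {r : ℝ | ∃ α β : ℝ, ∃ z ∈ L, 0 < α ∧ 0 < β ∧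
    α • M ⊆ (fun y => y + z) '' K ∧ (fun y => y + z) '' K ⊆ β • M ∧ r = β / α})

def Delta {d : ℕ} (L E : Submodule ℝ (EuclideanSpace ℝ (Fin d))) : ℝ :=
  sInf (rotDist '' {ρ | IsSO ρ ∧ L.map (Matrix.toEuclideanLin ρ) = E})

lemma normalize_sub_le' {E : Type*} [NormedAddCommGroup E] [NormedSpace ℝ E]
    (a b : E) (ha : a ≠ 0) (hb : b ≠ 0) :
    ‖‖a‖⁻¹ • a - ‖b‖⁻¹ • b‖ ≤ 2 * ‖a - b‖ / ‖a‖ := by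
  have ha' : (0:ℝ) < ‖a‖ := norm_pos_iff.2 ha
  have hb' : (0:ℝ) < ‖b‖ := norm_pos_iff.2 hb
  have key : ‖a‖⁻¹ • a - ‖b‖⁻¹ • b = ‖a‖⁻¹ • (a - b) + (‖a‖⁻¹ - ‖b‖⁻¹) • b := by
    rw [smul_sub, sub_smul]; abel
  have h2 : |‖a‖⁻¹ - ‖b‖⁻¹| * ‖b‖ ≤ ‖a - b‖ / ‖a‖ := by
    rw [inv_sub_inv ha'.ne' hb'.ne', abs_div, abs_of_pos (mul_pos ha' hb')]
    rw [div_mul_eq_mul_div, mul_comm ‖a‖ ‖b‖, ← div_div, mul_div_assoc,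
      div_self hb'.ne', mul_one]
    gcongr
    calc |‖b‖ - ‖a‖| = |‖b‖ - ‖a‖| := rfl
      _ ≤ ‖b - a‖ := abs_norm_sub_norm_le b a
      _ = ‖a - b‖ := norm_sub_rev b a
  calc ‖‖a‖⁻¹ • a - ‖b‖⁻¹ • b‖ = ‖‖a‖⁻¹ • (a - b) + (‖a‖⁻¹ - ‖b‖⁻¹) • b‖ := by rw [key]
    _ ≤ ‖‖a‖⁻¹ • (a - b)‖ + ‖(‖a‖⁻¹ - ‖b‖⁻¹) • b‖ := norm_add_le _ _
    _ = ‖a‖⁻¹ * ‖a - b‖ + |‖a‖⁻¹ - ‖b‖⁻¹| * ‖b‖ := by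
        rw [norm_smul, norm_smul, Real.norm_eq_abs, Real.norm_eq_abs,
          abs_of_pos (inv_pos.2 ha')]
    _ ≤ ‖a - b‖ / ‖a‖ + ‖a - b‖ / ‖a‖ := by
        rw [inv_mul_eq_div]; gcongr
    _ = 2 * ‖a - b‖ / ‖a‖ := by ring

/-- Stability of the spherical projection under perturbation of a unit vector. -/
theorem sphProj_stability {d : ℕ} (L : Submodule ℝ (EuclideanSpace ℝ (Fin d)))
    (ε : ℝ) (hε : 0 < ε) (hε' : ε ≤ 1 / 2)
    (u v : EuclideanSpace ℝ (Fin d)) (hu : ‖u‖ = 1) (hv : ‖v‖ = 1)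
    (huv : ‖u - v‖ ≤ ε ^ 3) (hpu : ε ≤ ‖projL L u‖) :
    ε / 2 ≤ ‖projL L v‖ ∧ v ∉ Lᗮ ∧ ‖sphProj L u - sphProj L v‖ ≤ 3 * ε := by
  have hproj : ‖projL L u - projL L v‖ ≤ ε ^ 3 := by
    have h1 : projL L u - projL L v
        = ((L.orthogonalProjection (u - v) : L) : EuclideanSpace ℝ (Fin d)) := by
      simp [projL, map_sub]
    rw [h1]
    calc (‖(L.orthogonalProjection (u - v) : L)‖ : ℝ)
        ≤ ‖L.orthogonalProjection‖ * ‖u - v‖ := (L.orthogonalProjection).le_opNorm _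
      _ ≤ 1 * ‖u - v‖ := by gcongr; exact Submodule.orthogonalProjectionOnto_norm_le L
      _ ≤ ε ^ 3 := by rw [one_mul]; exact huv
  have hsq : ε ^ 2 ≤ 1 / 4 := by nlinarith
  have hε3 : ε ^ 3 ≤ ε / 4 := by nlinarith [mul_le_mul_of_nonneg_left hsq hε.le]
  have hqv : ε / 2 ≤ ‖projL L v‖ := by
    have := norm_sub_norm_le (projL L u) (projL L v)
    linarith
  have hpu0 : projL L u ≠ 0 := by
    intro h; rw [h, norm_zero] at hpu; linarith
  have hqv0 : projL L v ≠ 0 := by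
    intro h; rw [h, norm_zero] at hqv; linarith
  refine ⟨hqv, ?_, ?_⟩
  · intro hmem
    exact hqv0 (by simp [projL, Submodule.orthogonalProjectionOnto_eq_zero_iff.2 hmem])
  · calc ‖sphProj L u - sphProj L v‖
        ≤ 2 * ‖projL L u - projL L v‖ / ‖projL L u‖ :=
          normalize_sub_le' _ _ hpu0 hqv0
      _ ≤ 2 * ε ^ 3 / ε := by gcongr
      _ ≤ 3 * ε := by rw [div_le_iff₀ hε]; nlinarith


end
end

section
/- Let d ≥ 2 and 1 ≤ k ≤ d−1. The function Δ is a metric on the set G(d,k) of k-dimensional linear subspaces of ℝ^d: for all L, E, F ∈ G(d,k), Δ(L,E) ≥ 0 with Δ(L,E) = 0 if and only if L = E, Δ(L,E) = Δ(E,L), and Δ(L,F) ≤ Δ(L,E) + Δ(E,F). -/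
open MeasureTheory Metric Matrix
open scoped RealInnerProductSpace Pointwise

noncomputable section

lemma frob_sum_sq_eq_trace {d : ℕ} (A : Matrix (Fin d) (Fin d) ℝ) :
    ∑ i, ∑ j, (A i j) ^ 2 = Matrix.trace (Aᵀ * A) := by
  rw [Matrix.trace]
  rw [Finset.sum_comm]
  congr 1
  ext j
  simp [Matrix.mul_apply, Matrix.diag, pow_two, Matrix.transpose_apply]

lemma frobNorm_nonneg {d : ℕ} (A : Matrix (Fin d) (Fin d) ℝ) : 0 ≤ frobNorm A :=
  Real.sqrt_nonneg _

lemma frobNorm_transpose {d : ℕ} (A : Matrix (Fin d) (Fin d) ℝ) :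
    frobNorm Aᵀ = frobNorm A := by
  unfold frobNorm
  congr 1
  rw [Finset.sum_comm]
  simp [Matrix.transpose_apply]

lemma frobNorm_neg {d : ℕ} (A : Matrix (Fin d) (Fin d) ℝ) : frobNorm (-A) = frobNorm A := by
  simp [frobNorm]

lemma frobNorm_mul_left {d : ℕ} {σ : Matrix (Fin d) (Fin d) ℝ} (h : σᵀ * σ = 1)
    (A : Matrix (Fin d) (Fin d) ℝ) : frobNorm (σ * A) = frobNorm A := by
  unfold frobNorm
  congr 1
  rw [frob_sum_sq_eq_trace, frob_sum_sq_eq_trace, Matrix.transpose_mul, Matrix.mul_assoc,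
    ← Matrix.mul_assoc σᵀ, h, Matrix.one_mul]

lemma frobNorm_eq_norm {d : ℕ} (A : Matrix (Fin d) (Fin d) ℝ) :
    frobNorm A = ‖(WithLp.equiv 2 (Fin d × Fin d → ℝ)).symm (fun p => A p.1 p.2)‖ := by
  rw [EuclideanSpace.norm_eq]
  unfold frobNorm
  congr 1
  simp only [WithLp.equiv_symm_apply, PiLp.toLp_apply, Real.norm_eq_abs, sq_abs]
  exact (Fintype.sum_prod_type (f := fun p => A p.1 p.2 ^ 2)).symm

lemma frobNorm_add_le {d : ℕ} (A B : Matrix (Fin d) (Fin d) ℝ) :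
    frobNorm (A + B) ≤ frobNorm A + frobNorm B := by
  rw [frobNorm_eq_norm, frobNorm_eq_norm, frobNorm_eq_norm]
  have : (WithLp.equiv 2 (Fin d × Fin d → ℝ)).symm (fun p => (A + B) p.1 p.2)
      = (WithLp.equiv 2 (Fin d × Fin d → ℝ)).symm (fun p => A p.1 p.2)
        + (WithLp.equiv 2 (Fin d × Fin d → ℝ)).symm (fun p => B p.1 p.2) := rfl
  rw [this]
  exact norm_add_le _ _
lemma toEuclideanLin_one {d : ℕ} :
    Matrix.toEuclideanLin (1 : Matrix (Fin d) (Fin d) ℝ) = LinearMap.id := by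
  rw [Matrix.toEuclideanLin_eq_toLin, Matrix.toLin_one]

lemma toEuclideanLin_mul {d : ℕ} (A B : Matrix (Fin d) (Fin d) ℝ) :
    Matrix.toEuclideanLin (A * B) =
      (Matrix.toEuclideanLin A).comp (Matrix.toEuclideanLin B) := by
  rw [Matrix.toEuclideanLin_eq_toLin, Matrix.toLin_mul (v₂ := (PiLp.basisFun 2 ℝ (Fin d)))]

lemma norm_toEuclideanLin_apply_le {d : ℕ} (A : Matrix (Fin d) (Fin d) ℝ)
    (x : EuclideanSpace ℝ (Fin d)) :
    ‖Matrix.toEuclideanLin A x‖ ≤ frobNorm A * ‖x‖ := by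
  rw [EuclideanSpace.norm_eq, EuclideanSpace.norm_eq]
  unfold frobNorm
  rw [← Real.sqrt_mul (by positivity)]
  apply Real.sqrt_le_sqrt
  simp only [Matrix.toEuclideanLin_apply, WithLp.equiv_symm_apply, PiLp.toLp_apply, Real.norm_eq_abs, sq_abs]
  rw [Finset.sum_mul]
  apply Finset.sum_le_sum
  intro i _
  have h := Finset.sum_mul_sq_le_sq_mul_sq Finset.univ (fun j => A i j) (fun j => (WithLp.equiv 2 (Fin d → ℝ)) x j)
  have h2 : (A *ᵥ (WithLp.equiv 2 (Fin d → ℝ)) x) i ^ 2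
      = (∑ j, A i j * (WithLp.equiv 2 (Fin d → ℝ)) x j) ^ 2 := by
    simp [Matrix.mulVec, dotProduct]
  erw [h2]
  exact h
lemma real_inner_euclidean {d : ℕ} (x y : EuclideanSpace ℝ (Fin d)) :
    ⟪x, y⟫ = ∑ l, x l * y l := by
  simp [PiLp.inner_apply, RCLike.inner_apply]
  exact Finset.sum_congr rfl fun _ _ => mul_comm _ _

lemma exists_adapted_basis {d k : ℕ} (hk : k ≤ d)
    (L : Submodule ℝ (EuclideanSpace ℝ (Fin d))) (hL : Module.finrank ℝ L = k) :
    ∃ B : OrthonormalBasis (Fin d) ℝ (EuclideanSpace ℝ (Fin d)),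
      L = Submodule.span ℝ (B '' {i : Fin d | (i : ℕ) < k}) := by
  haveI : FiniteDimensional ℝ L := FiniteDimensional.finiteDimensional_submodule L
  let b0 := stdOrthonormalBasis ℝ L
  let b : OrthonormalBasis (Fin k) ℝ L := b0.reindex (finCongr (by rw [hL]))
  set s : Set (Fin d) := {i : Fin d | (i : ℕ) < k} with hs
  set v : Fin d → EuclideanSpace ℝ (Fin d) :=
    fun i => if h : (i : ℕ) < k then (b ⟨i, h⟩ : EuclideanSpace ℝ (Fin d)) else 0 with hv
  have hcoe : Orthonormal ℝ (fun j : Fin k => (b j : EuclideanSpace ℝ (Fin d))) := by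
    have := b.orthonormal.comp_linearIsometry L.subtypeₗᵢ
    exact this
  have hres : Orthonormal ℝ (s.restrict v) := by
    have : s.restrict v = (fun j : Fin k => (b j : EuclideanSpace ℝ (Fin d)))
        ∘ (fun i : s => (⟨(i : Fin d), i.2⟩ : Fin k)) := by
      funext i
      simp only [Set.restrict_apply, Function.comp_apply, hv]
      exact dif_pos i.2
    rw [this]
    exact hcoe.comp _ (fun i j hij =>
      Subtype.ext (Fin.ext (by simpa using congrArg Fin.val hij)))
  obtain ⟨B, hB⟩ := hres.exists_orthonormalBasis_extension_of_card_eq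
    (by simp [finrank_euclideanSpace]) 
  refine ⟨B, ?_⟩
  have hrange : L = Submodule.span ℝ (Set.range (fun j : Fin k => (b j : EuclideanSpace ℝ (Fin d)))) := by
    conv_lhs => rw [← Submodule.map_subtype_top L]
    rw [← b.toBasis.span_eq, Submodule.map_span]
    congr 1
    rw [← Set.range_comp]
    congr 1
  rw [hrange]
  congr 1
  ext y
  constructor
  · rintro ⟨j, rfl⟩
    exact ⟨⟨(j : ℕ), lt_of_lt_of_le j.2 hk⟩, j.2, by
      rw [hB _ j.2]
      simp only [hv]
      have hj' : ((⟨(j : ℕ), lt_of_lt_of_le j.2 hk⟩ : Fin d) : ℕ) < k := j.2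
      rw [dif_pos hj']⟩
  · rintro ⟨i, hi, rfl⟩
    refine ⟨⟨(i : ℕ), hi⟩, ?_⟩
    rw [hB _ hi]
    simp only [hv]
    have hi' : (i : ℕ) < k := hi
    rw [dif_pos hi']

lemma exists_SO_map {d k : ℕ} (hkd : k < d)
    (L E : Submodule ℝ (EuclideanSpace ℝ (Fin d)))
    (hL : Module.finrank ℝ L = k) (hE : Module.finrank ℝ E = k) :
    ∃ ρ : Matrix (Fin d) (Fin d) ℝ, IsSO ρ ∧ L.map (Matrix.toEuclideanLin ρ) = E := by
  obtain ⟨B, hB⟩ := exists_adapted_basis hkd.le L hL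
  obtain ⟨C, hC⟩ := exists_adapted_basis hkd.le E hE
  set s : Set (Fin d) := {i : Fin d | (i : ℕ) < k} with hs
  set f : EuclideanSpace ℝ (Fin d) ≃ₗᵢ[ℝ] EuclideanSpace ℝ (Fin d) :=
    B.repr.trans C.repr.symm with hf
  have hfB : ∀ i, f (B i) = C i := by
    intro i
    simp only [hf, LinearIsometryEquiv.trans_apply, B.repr_self, C.repr_symm_single]
  set F : EuclideanSpace ℝ (Fin d) →ₗ[ℝ] EuclideanSpace ℝ (Fin d) :=
    (f.toLinearEquiv : EuclideanSpace ℝ (Fin d) →ₗ[ℝ] EuclideanSpace ℝ (Fin d)) with hF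
  set σ : Matrix (Fin d) (Fin d) ℝ := Matrix.toEuclideanLin.symm F with hσ
  have hσF : Matrix.toEuclideanLin σ = F := Matrix.toEuclideanLin.apply_symm_apply F
  -- columns of a matrix
  have hcol : ∀ (A : Matrix (Fin d) (Fin d) ℝ) (i l : Fin d),
      A l i = (Matrix.toEuclideanLin A (EuclideanSpace.single i 1)) l := by
    intro A i l
    rw [Matrix.toEuclideanLin_apply]
    simp [Matrix.mulVec, dotProduct, EuclideanSpace.single_apply]
  have hσO : σᵀ * σ = 1 := by
    ext i j
    have : (σᵀ * σ) i j = ∑ l, σ l i * σ l j := by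
      simp [Matrix.mul_apply, Matrix.transpose_apply]
    rw [this]
    have h2 : ∑ l, σ l i * σ l j
        = ⟪Matrix.toEuclideanLin σ (EuclideanSpace.single i 1),
            Matrix.toEuclideanLin σ (EuclideanSpace.single j 1)⟫ := by
      rw [real_inner_euclidean]
      exact Finset.sum_congr rfl fun l _ => by rw [hcol σ i l, hcol σ j l]
    rw [h2, hσF]
    have h3 : (F (EuclideanSpace.single i 1)) = f (EuclideanSpace.single i 1) := rfl
    have h4 : (F (EuclideanSpace.single j 1)) = f (EuclideanSpace.single j 1) := rfl
    rw [h3, h4, f.inner_map_map, EuclideanSpace.inner_single_left]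
    simp [EuclideanSpace.single_apply, Matrix.one_apply, eq_comm]
  have hdet : σ.det = 1 ∨ σ.det = -1 := by
    have := congrArg Matrix.det hσO
    rw [Matrix.det_mul, Matrix.det_transpose, Matrix.det_one] at this
    exact mul_self_eq_one_iff.mp this
  have hmapσ : L.map (Matrix.toEuclideanLin σ) = E := by
    rw [hσF, hB, hC, Submodule.map_span]
    congr 1
    rw [← Set.image_comp]
    exact Set.image_congr fun i _ => hfB i
  rcases hdet with hdet1 | hdetm
  · exact ⟨σ, ⟨hσO, hdet1⟩, hmapσ⟩
  · -- Householder reflection fixing E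
    set jl : Fin d := ⟨d - 1, by omega⟩ with hjl
    set c : Fin d → ℝ := (C jl : EuclideanSpace ℝ (Fin d)).ofLp with hc
    have hcc : c ⬝ᵥ c = 1 := by
      have hn := C.orthonormal.1 jl
      have h1 : ⟪C jl, C jl⟫ = 1 := by
        rw [real_inner_self_eq_norm_mul_norm, hn]; norm_num
      rw [real_inner_euclidean] at h1
      exact h1
    set M : Matrix (Fin d) (Fin d) ℝ := Matrix.replicateCol Unit c * Matrix.replicateRow Unit c with hM
    have hMapp : ∀ l m, M l m = c l * c m := by
      intro l m
      simp [hM, Matrix.mul_apply, Matrix.replicateCol_apply, Matrix.replicateRow_apply]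
    set R : Matrix (Fin d) (Fin d) ℝ := 1 - (2 : ℝ) • M with hR
    have hMM : M * M = M := by
      ext l m
      simp only [Matrix.mul_apply, hMapp]
      have : ∑ p, c l * c p * (c p * c m) = (c l * c m) * ∑ p, c p * c p := by
        rw [Finset.mul_sum]; exact Finset.sum_congr rfl fun p _ => by ring
      have hccs : ∑ p, c p * c p = 1 := hcc
      rw [this, hccs, mul_one]
    have hRsymm : Rᵀ = R := by
      rw [hR, Matrix.transpose_sub, Matrix.transpose_smul, Matrix.transpose_one, hM,
        Matrix.transpose_mul, Matrix.transpose_replicateRow, Matrix.transpose_replicateCol]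
    have hRapp : ∀ l m, R l m = (if l = m then (1:ℝ) else 0) - 2 * (c l * c m) := by
      intro l m
      simp [hR, Matrix.sub_apply, Matrix.smul_apply, Matrix.one_apply, hMapp]
    have hccs : ∑ p, c p * c p = 1 := hcc
    have hsum1 : ∀ m, ∑ p, c p * R p m = - c m := by
      intro m
      have : ∀ p, c p * R p m = (if p = m then c p else 0) - 2 * c m * (c p * c p) := by
        intro p
        rw [hRapp p m]
        by_cases h : p = m <;> simp [h] <;> ring
      rw [Finset.sum_congr rfl fun p _ => this p, Finset.sum_sub_distrib,
        Finset.sum_ite_eq' Finset.univ m c, ← Finset.mul_sum, hccs]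
      simp
      ring
    have hRR : R * R = 1 := by
      ext l m
      rw [Matrix.mul_apply]
      have step1 : ∑ p, R l p * R p m
          = ∑ p, ((if l = p then (1:ℝ) else 0) * R p m) - 2 * c l * ∑ p, c p * R p m := by
        rw [Finset.mul_sum, ← Finset.sum_sub_distrib]
        exact Finset.sum_congr rfl fun p _ => by rw [hRapp l p]; ring
      rw [step1, hsum1]
      have step2 : ∑ p, ((if l = p then (1:ℝ) else 0) * R p m) = R l m := by
        simp [Finset.sum_ite_eq]
      rw [step2, hRapp l m]
      simp [Matrix.one_apply]
      ring
    have hRO : Rᵀ * R = 1 := by rw [hRsymm, hRR]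
    have hRdet : R.det = -1 := by
      have h5 : R = 1 + Matrix.replicateCol Unit (fun l => (-2 : ℝ) * c l) * Matrix.replicateRow Unit c := by
        ext l m
        simp only [hR, Matrix.sub_apply, Matrix.add_apply, Matrix.smul_apply, smul_eq_mul,
          Matrix.mul_apply, Matrix.replicateCol_apply, Matrix.replicateRow_apply, hMapp]
        simp
        ring
      rw [h5, Matrix.det_one_add_replicateCol_mul_replicateRow]
      have : c ⬝ᵥ (fun l => (-2 : ℝ) * c l) = -2 := by
        have : c ⬝ᵥ (fun l => (-2 : ℝ) * c l) = -2 * (c ⬝ᵥ c) := by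
          simp [dotProduct, Finset.mul_sum]
          exact Finset.sum_congr rfl fun p _ => by ring
        rw [this, hcc]; ring
      rw [this]; norm_num
    -- R fixes the spanning vectors of E
    have hRfix : ∀ i ∈ s, Matrix.toEuclideanLin R (C i) = C i := by
      intro i hi
      have hne : jl ≠ i := by
        intro h
        rw [← h] at hi
        simp only [hs, Set.mem_setOf_eq, hjl] at hi
        omega
      have horth : c ⬝ᵥ (fun l => (C i : EuclideanSpace ℝ (Fin d)) l) = 0 := by
        have h0 : ⟪(C jl : EuclideanSpace ℝ (Fin d)), C i⟫ = 0 := C.orthonormal.2 hne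
        rw [real_inner_euclidean] at h0
        exact h0
      apply PiLp.ext
      intro l
      rw [Matrix.toEuclideanLin_apply]
      simp only [WithLp.equiv_symm_apply, PiLp.toLp_apply]
      have : (R *ᵥ (WithLp.equiv 2 (Fin d → ℝ)) (C i)) l
          = (C i : EuclideanSpace ℝ (Fin d)) l
            - 2 * c l * (c ⬝ᵥ fun l => (C i : EuclideanSpace ℝ (Fin d)) l) := by
        simp only [hR, Matrix.sub_mulVec, Matrix.smul_mulVec, Pi.sub_apply,
          Pi.smul_apply, smul_eq_mul]
        congr 1
        · simp [Matrix.mulVec, dotProduct, Matrix.one_apply]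
        · simp only [Matrix.mulVec, dotProduct, hMapp, WithLp.equiv_apply]
          rw [Finset.mul_sum, Finset.mul_sum]
          exact Finset.sum_congr rfl fun p _ => by ring
      erw [this, horth]
      ring
    have hmapR : E.map (Matrix.toEuclideanLin R) = E := by
      rw [hC, Submodule.map_span]
      congr 1
      rw [← Set.image_comp]
      exact Set.image_congr fun i hi => hRfix i hi
    refine ⟨R * σ, ⟨?_, ?_⟩, ?_⟩
    · rw [Matrix.transpose_mul, Matrix.mul_assoc, ← Matrix.mul_assoc Rᵀ, hRO,
        Matrix.one_mul, hσO]
    · rw [Matrix.det_mul, hRdet, hdetm]; ring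
    · rw [toEuclideanLin_mul, Submodule.map_comp, hmapσ, hmapR]


/-- Δ is a metric on the Grassmannian G(d,k). -/
theorem Delta_is_metric {d k : ℕ} (hd : 2 ≤ d) (hk1 : 1 ≤ k) (hkd : k ≤ d - 1)
    (L E F : Submodule ℝ (EuclideanSpace ℝ (Fin d)))
    (hL : Module.finrank ℝ L = k) (hE : Module.finrank ℝ E = k)
    (hF : Module.finrank ℝ F = k) :
    0 ≤ Delta L E ∧ (Delta L E = 0 ↔ L = E) ∧ Delta L E = Delta E L ∧
      Delta L F ≤ Delta L E + Delta E F := by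
  have hkd' : k < d := by omega
  -- the admissible sets
  set S : Submodule ℝ (EuclideanSpace ℝ (Fin d)) → Submodule ℝ (EuclideanSpace ℝ (Fin d)) →
      Set (Matrix (Fin d) (Fin d) ℝ) :=
    fun L E => {ρ | IsSO ρ ∧ L.map (Matrix.toEuclideanLin ρ) = E} with hS
  have hDelta : ∀ L E, Delta L E = sInf (rotDist '' S L E) := fun _ _ => rfl
  have hne : ∀ L' E' : Submodule ℝ (EuclideanSpace ℝ (Fin d)),
      Module.finrank ℝ L' = k → Module.finrank ℝ E' = k → (rotDist '' S L' E').Nonempty := by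
    intro L' E' h1 h2
    obtain ⟨ρ, hρ⟩ := exists_SO_map hkd' L' E' h1 h2
    exact ⟨rotDist ρ, ρ, hρ, rfl⟩
  have hbdd : ∀ L' E' : Submodule ℝ (EuclideanSpace ℝ (Fin d)),
      BddBelow (rotDist '' S L' E') := by
    intro L' E'
    exact ⟨0, by rintro x ⟨ρ, _, rfl⟩; exact Real.sqrt_nonneg _⟩
  have hnonneg : ∀ L' E' : Submodule ℝ (EuclideanSpace ℝ (Fin d)), 0 ≤ Delta L' E' := by
    intro L' E'
    exact Real.sInf_nonneg (by rintro x ⟨ρ, _, rfl⟩; exact Real.sqrt_nonneg _)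
  refine ⟨hnonneg L E, ⟨?_, ?_⟩, ?_, ?_⟩
  · -- Delta L E = 0 → L = E
    intro h0
    haveI : FiniteDimensional ℝ E := FiniteDimensional.finiteDimensional_submodule E
    apply Submodule.eq_of_le_of_finrank_eq _ (by rw [hL, hE])
    intro x hx
    have hclosed : IsClosed (E : Set (EuclideanSpace ℝ (Fin d))) :=
      Submodule.closed_of_finiteDimensional E
    have hxc : x ∈ closure (E : Set (EuclideanSpace ℝ (Fin d))) := by
      rw [Metric.mem_closure_iff]
      intro ε hε
      set ε' : ℝ := ε / (‖x‖ + 1) with hε'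
      have hε'pos : 0 < ε' := div_pos hε (by positivity)
      have hlt : sInf (rotDist '' S L E) < ε' := by
        rw [← hDelta, h0]; exact hε'pos
      obtain ⟨a, ⟨ρ, hρ, rfl⟩, ha⟩ := exists_lt_of_csInf_lt (hne L E hL hE) hlt
      refine ⟨Matrix.toEuclideanLin ρ x, ?_, ?_⟩
      · rw [← hρ.2]; exact Submodule.mem_map_of_mem hx
      · rw [dist_eq_norm]
        have hxy : x - Matrix.toEuclideanLin ρ x = Matrix.toEuclideanLin (1 - ρ) x := by
          rw [map_sub, LinearMap.sub_apply, toEuclideanLin_one, LinearMap.id_apply]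
        rw [hxy]
        calc ‖Matrix.toEuclideanLin (1 - ρ) x‖ ≤ frobNorm (1 - ρ) * ‖x‖ :=
              norm_toEuclideanLin_apply_le _ _
          _ = rotDist ρ * ‖x‖ := by rw [← neg_sub, frobNorm_neg]; rfl
          _ ≤ rotDist ρ * (‖x‖ + 1) := by
              apply mul_le_mul_of_nonneg_left (by linarith) (Real.sqrt_nonneg _)
          _ < ε' * (‖x‖ + 1) := by
              apply mul_lt_mul_of_pos_right ha (by positivity)
          _ = ε := by rw [hε']; field_simp
    rwa [hclosed.closure_eq] at hxc
  · -- L = E → Delta L E = 0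
    rintro rfl
    refine le_antisymm ?_ (hnonneg L L)
    have h1 : (0 : ℝ) ∈ rotDist '' S L L := by
      refine ⟨1, ⟨⟨by rw [Matrix.transpose_one, Matrix.one_mul], Matrix.det_one⟩, ?_⟩, ?_⟩
      · rw [toEuclideanLin_one, Submodule.map_id]
      · simp [rotDist, frobNorm]
    exact csInf_le (hbdd L L) h1
  · -- symmetry
    have key : ∀ L' E' : Submodule ℝ (EuclideanSpace ℝ (Fin d)),
        (rotDist '' S L' E') ⊆ (rotDist '' S E' L') := by
      rintro L' E' a ⟨ρ, ⟨⟨hO, hdet⟩, hmap⟩, rfl⟩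
      refine ⟨ρᵀ, ⟨⟨?_, ?_⟩, ?_⟩, ?_⟩
      · rw [Matrix.transpose_transpose, mul_eq_one_comm.mp hO]
      · rw [Matrix.det_transpose, hdet]
      · rw [← hmap, ← Submodule.map_comp, ← toEuclideanLin_mul, hO, toEuclideanLin_one,
          Submodule.map_id]
      · show rotDist ρᵀ = rotDist ρ
        unfold rotDist
        rw [show ρᵀ - 1 = (ρ - 1)ᵀ by rw [Matrix.transpose_sub, Matrix.transpose_one],
          frobNorm_transpose]
    rw [hDelta, hDelta]
    congr 1
    exact le_antisymm (key L E) (key E L)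
  · -- triangle
    have key : ∀ ρ ∈ S L E, ∀ σ ∈ S E F, Delta L F ≤ rotDist ρ + rotDist σ := by
      intro ρ ⟨⟨hρO, hρdet⟩, hρmap⟩ σ ⟨⟨hσO, hσdet⟩, hσmap⟩
      have hmem : σ * ρ ∈ S L F := by
        refine ⟨⟨?_, ?_⟩, ?_⟩
        · rw [Matrix.transpose_mul, Matrix.mul_assoc, ← Matrix.mul_assoc σᵀ, hσO,
            Matrix.one_mul, hρO]
        · rw [Matrix.det_mul, hσdet, hρdet, one_mul]
        · rw [toEuclideanLin_mul, Submodule.map_comp, hρmap, hσmap]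
      have htri : rotDist (σ * ρ) ≤ rotDist ρ + rotDist σ := by
        unfold rotDist
        have hsplit : σ * ρ - 1 = σ * (ρ - 1) + (σ - 1) := by
          rw [Matrix.mul_sub, Matrix.mul_one]
          abel
        rw [hsplit]
        calc frobNorm (σ * (ρ - 1) + (σ - 1))
            ≤ frobNorm (σ * (ρ - 1)) + frobNorm (σ - 1) := frobNorm_add_le _ _
          _ = frobNorm (ρ - 1) + frobNorm (σ - 1) := by rw [frobNorm_mul_left hσO]
      calc Delta L F ≤ rotDist (σ * ρ) := csInf_le (hbdd L F) ⟨σ * ρ, hmem, rfl⟩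
        _ ≤ rotDist ρ + rotDist σ := htri
    have h1 : Delta L F - Delta E F ≤ Delta L E := by
      apply le_csInf (hne L E hL hE)
      rintro a ⟨ρ, hρ, rfl⟩
      have h2 : Delta L F - rotDist ρ ≤ Delta E F := by
        apply le_csInf (hne E F hE hF)
        rintro b ⟨σ, hσ, rfl⟩
        have := key ρ hρ σ hσ
        linarith
      linarith
    linarith


end
end
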